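/- Let (A,≻,≺) be a finite-dimensional dendriform algebra over a field F, with {e_1,…,e_n} a basis of A and {e_1*,…,e_n*} its dual basis. Define a dendriform algebra structure on D = A ⊕ A* by (x+a*) ≻' (y+b*) = x≻y + R≺*(x)b* and (x+a*) ≺' (y+b*) = x≺y + L≻*(y)a*, where ⟨R≺*(x)a*, y⟩ = ⟨a*, y≺x⟩ and ⟨L≻*(x)a*, y⟩ = ⟨a*, x≻y⟩. Then: (i) (D,≻',≺') is a dendriform algebra; (ii) r = Σ_i (e_i ⊗ e_i* + e_i* ⊗ e_i) ∈ D⊗D is a symmetric solution of the D-equation in D; (iii) r is nondegenerate and the bilinear form B on D induced by r⁻¹ is B(x+a*, y+b*) = ⟨x, b*⟩ + ⟨a*, y⟩. -/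

import Mathlib

open TensorProduct LinearMap

section Prelude
variable {F : Type*} [Field F]

/-- Associativity of a (nonunital) bilinear product. -/
def IsAssocMul {A : Type*} [AddCommGroup A] [Module F A]
    (m : A →ₗ[F] A →ₗ[F] A) : Prop :=
  ∀ x y z, m (m x y) z = m x (m y z)

/-- `(l, r, V)` is a bimodule of the associative algebra `(A, m)`. -/
def IsBimodule {A V : Type*} [AddCommGroup A] [Module F A]
    [AddCommGroup V] [Module F V]
    (m : A →ₗ[F] A →ₗ[F] A) (l r : A →ₗ[F] V →ₗ[F] V) : Prop :=
  (∀ x y v, l (m x y) v = l x (l y v)) ∧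
  (∀ x y v, r (m x y) v = r y (r x v)) ∧
  (∀ x y v, l x (r y v) = r y (l x v))

/-- `(A, B, lA, rA, lB, rB)` is a matched pair of associative algebras. -/
def IsMatchedPair {A B : Type*} [AddCommGroup A] [Module F A]
    [AddCommGroup B] [Module F B]
    (mA : A →ₗ[F] A →ₗ[F] A) (mB : B →ₗ[F] B →ₗ[F] B)
    (lA rA : A →ₗ[F] B →ₗ[F] B) (lB rB : B →ₗ[F] A →ₗ[F] A) : Prop :=
  IsAssocMul mA ∧ IsAssocMul mB ∧ IsBimodule mA lA rA ∧ IsBimodule mB lB rB ∧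
  (∀ x a b, lA x (mB a b) = lA (rB a x) b + mB (lA x a) b) ∧
  (∀ x a b, rA x (mB a b) = rA (lB b x) a + mB a (rA x b)) ∧
  (∀ a x y, lB a (mA x y) = lB (rA x a) y + mA (lB a x) y) ∧
  (∀ a x y, rB a (mA x y) = rB (lA y a) x + mA x (rB a y)) ∧
  (∀ x a b, lA (lB a x) b + mB (rA x a) b - rA (rB b x) a - mB a (lA x b) = 0) ∧
  (∀ a x y, lB (lA x a) y + mA (rB a x) y - rB (rA y a) x - mA x (lB a y) = 0)

/-- Dendriform algebra axioms for a pair of bilinear products `≻ = s`, `≺ = p`. -/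
def IsDendriform {A : Type*} [AddCommGroup A] [Module F A]
    (s p : A →ₗ[F] A →ₗ[F] A) : Prop :=
  (∀ x y z, p (p x y) z = p x (s y z + p y z)) ∧
  (∀ x y z, p (s x y) z = s x (p y z)) ∧
  (∀ x y z, s x (s y z) = s (s x y + p x y) z)

/-- The pairing of `f ⊗ g ∈ A* ⊗ A*` with elements of `A ⊗ A`. -/
noncomputable def pair2 {A : Type*} [AddCommGroup A] [Module F A]
    (f g : Module.Dual F A) : (A ⊗[F] A) →ₗ[F] F :=
  (TensorProduct.lid F F).toLinearMap ∘ₗ TensorProduct.map f g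

/-- `t12 m (r ⊗ s)` is `r₁₂ ∙ s₁₃`: on `(x ⊗ y) ⊗ (x' ⊗ y')` it gives `m x x' ⊗ y ⊗ y'`. -/
noncomputable def t12 {A : Type*} [AddCommGroup A] [Module F A]
    (m : A →ₗ[F] A →ₗ[F] A) :
    ((A ⊗[F] A) ⊗[F] (A ⊗[F] A)) →ₗ[F] A ⊗[F] (A ⊗[F] A) :=
  TensorProduct.map (TensorProduct.lift m) LinearMap.id ∘ₗ
    (TensorProduct.tensorTensorTensorComm F A A A A).toLinearMap

/-- `t13 m (r ⊗ s)` is `r₁₃ ∙ s₂₃`: on `(x ⊗ y) ⊗ (x' ⊗ y')` it gives `x ⊗ x' ⊗ m y y'`. -/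
noncomputable def t13 {A : Type*} [AddCommGroup A] [Module F A]
    (m : A →ₗ[F] A →ₗ[F] A) :
    ((A ⊗[F] A) ⊗[F] (A ⊗[F] A)) →ₗ[F] A ⊗[F] (A ⊗[F] A) :=
  (TensorProduct.assoc F A A A).toLinearMap ∘ₗ
    TensorProduct.map LinearMap.id (TensorProduct.lift m) ∘ₗ
    (TensorProduct.tensorTensorTensorComm F A A A A).toLinearMap

/-- `t23 m (r ⊗ s)` is `r₂₃ ∙ s₁₂`: on `(x ⊗ y) ⊗ (x' ⊗ y')` it gives `x' ⊗ m x y' ⊗ y`. -/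
noncomputable def t23 {A : Type*} [AddCommGroup A] [Module F A]
    (m : A →ₗ[F] A →ₗ[F] A) :
    ((A ⊗[F] A) ⊗[F] (A ⊗[F] A)) →ₗ[F] A ⊗[F] (A ⊗[F] A) :=
  (TensorProduct.leftComm F A A A).toLinearMap ∘ₗ
    TensorProduct.map LinearMap.id (TensorProduct.comm F A A).toLinearMap ∘ₗ
    TensorProduct.map (TensorProduct.lift m) LinearMap.id ∘ₗ
    (TensorProduct.tensorTensorTensorComm F A A A A).toLinearMap ∘ₗ
    TensorProduct.map LinearMap.id (TensorProduct.comm F A A).toLinearMap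

/-- `aybE m r = r₁₂r₁₃ + r₁₃r₂₃ − r₂₃r₁₂`, the associative Yang–Baxter expression. -/
noncomputable def aybE {A : Type*} [AddCommGroup A] [Module F A]
    (m : A →ₗ[F] A →ₗ[F] A) (r : A ⊗[F] A) : A ⊗[F] (A ⊗[F] A) :=
  t12 m (r ⊗ₜ r) + t13 m (r ⊗ₜ r) - t23 m (r ⊗ₜ r)

end Prelude

set_option maxHeartbeats 2000000 in
/-- on `D = A ⊕ A*` with products
`(x+a*) ≻' (y+b*) = x ≻ y + R≺*(x) b*` and
`(x+a*) ≺' (y+b*) = x ≺ y + L≻*(y) a*`: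
(i) `D` is a dendriform algebra;
(ii) `r = Σᵢ (eᵢ ⊗ eᵢ* + eᵢ* ⊗ eᵢ)` is a symmetric solution of the
`D`-equation in `D`;
(iii) `r` is nondegenerate and the bilinear form induced by `r⁻¹` is
`B(x+a*, y+b*) = ⟨x, b*⟩ + ⟨a*, y⟩`. -/
theorem canonical_symmetric_solution_of_D_equation
    {F A : Type*} [Field F] [AddCommGroup A] [Module F A]
    {ι : Type*} [Fintype ι] (bA : Module.Basis ι F A)
    (s p : A →ₗ[F] A →ₗ[F] A) (hd : IsDendriform s p)
    -- the dual operators `R≺*` and `L≻*`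
    (Rp Ls : A →ₗ[F] Module.Dual F A →ₗ[F] Module.Dual F A)
    (hRp : ∀ (x y : A) (a : Module.Dual F A), Rp x a y = a (p y x))
    (hLs : ∀ (x y : A) (a : Module.Dual F A), Ls x a y = a (s x y))
    -- the dendriform products on `D = A ⊕ A*`
    (sD pD : (A × Module.Dual F A) →ₗ[F] (A × Module.Dual F A) →ₗ[F]
      (A × Module.Dual F A))
    (hsD : ∀ u v : A × Module.Dual F A, sD u v = (s u.1 v.1, Rp u.1 v.2))
    (hpD : ∀ u v : A × Module.Dual F A, pD u v = (p u.1 v.1, Ls v.1 u.2))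
    -- the canonical element `r = Σᵢ (eᵢ ⊗ eᵢ* + eᵢ* ⊗ eᵢ)`
    (r : (A × Module.Dual F A) ⊗[F] (A × Module.Dual F A))
    (hr : r = ∑ i : ι,
      (((bA i, 0) : A × Module.Dual F A) ⊗ₜ[F]
        (((0 : A), bA.coord i) : A × Module.Dual F A) +
       (((0 : A), bA.coord i) : A × Module.Dual F A) ⊗ₜ[F]
        ((bA i, 0) : A × Module.Dual F A))) :
    IsDendriform sD pD ∧
    ((TensorProduct.comm F (A × Module.Dual F A) (A × Module.Dual F A)) r = r ∧
      t12 (sD + pD) (r ⊗ₜ r) = t13 pD (r ⊗ₜ r) + t23 sD (r ⊗ₜ r)) ∧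
    (∃ e : Module.Dual F (A × Module.Dual F A) ≃ₗ[F] (A × Module.Dual F A),
      (∀ u v : Module.Dual F (A × Module.Dual F A), u (e v) = pair2 u v r) ∧
      (∀ u v : A × Module.Dual F A, e.symm u v = v.2 u.1 + u.2 v.1)) := by
  classical
  obtain ⟨hd1, hd2, hd3⟩ := hd
  -- Part (i)
  have part1 : IsDendriform sD pD := by
    refine ⟨?_, ?_, ?_⟩
    · intro x y z
      rw [hpD, hpD, hpD, hsD, hpD]
      simp only [Prod.fst_add]
      refine Prod.ext (hd1 x.1 y.1 z.1) ?_
      ext w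
      rw [hLs, hLs, hLs]
      exact congrArg x.2 (hd3 y.1 z.1 w)
    · intro x y z
      rw [hpD, hsD, hsD, hpD]
      refine Prod.ext (hd2 x.1 y.1 z.1) ?_
      ext w
      rw [hLs, hRp, hRp, hLs]
      exact congrArg y.2 (hd2 z.1 w x.1)
    · intro x y z
      rw [hsD, hsD, hsD, hsD, hpD]
      simp only [Prod.fst_add]
      refine Prod.ext (hd3 x.1 y.1 z.1) ?_
      ext w
      rw [hRp, hRp, hRp]
      exact congrArg z.2 (hd1 w x.1 y.1)
  -- symmetry
  have hsymm : (TensorProduct.comm F (A × Module.Dual F A) (A × Module.Dual F A)) r = r := by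
    rw [hr, map_sum]
    refine Finset.sum_congr rfl fun i _ => ?_
    rw [map_add, TensorProduct.comm_tmul, TensorProduct.comm_tmul, add_comm]
  -- shared notation
  set E : ι → A × Module.Dual F A := fun i => (bA i, 0) with hE
  set Fv : ι → A × Module.Dual F A := fun i => (0, bA.coord i) with hFv
  have hr' : r = ∑ i, (E i ⊗ₜ[F] Fv i + Fv i ⊗ₜ[F] E i) := by
    simp only [hE, hFv]; exact hr
  have exE : ∀ x : A, ((x, 0) : A × Module.Dual F A) = ∑ k, (bA.coord k x) • E k := by
    intro x
    refine Prod.ext ?_ ?_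
    · rw [Prod.fst_sum]
      simp only [hE, Prod.smul_fst, Prod.smul_snd]
      simp [Module.Basis.coord_apply]
    · rw [Prod.snd_sum]
      simp [hE]
  have exF : ∀ a : Module.Dual F A,
      ((0, a) : A × Module.Dual F A) = ∑ k, (a (bA k)) • Fv k := by
    intro a
    refine Prod.ext ?_ ?_
    · rw [Prod.fst_sum]
      simp [hFv]
    · rw [Prod.snd_sum]
      simp [hFv]
  have hexp : ∀ w : A × Module.Dual F A,
      w = ∑ i, ((bA.coord i w.1) • E i + (w.2 (bA i)) • Fv i) := by
    intro w
    have h1 : ((w.1, 0) : A × Module.Dual F A) + (0, w.2) = w := by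
      refine Prod.ext ?_ ?_ <;> simp
    conv_lhs => rw [← h1, exE w.1, exF w.2]
    rw [← Finset.sum_add_distrib]
  refine ⟨part1, ⟨hsymm, ?_⟩, ?_⟩
  · -- Part (ii): the D-equation
    have ht12 : ∀ (m : (A × Module.Dual F A) →ₗ[F] (A × Module.Dual F A) →ₗ[F]
        (A × Module.Dual F A)) (x y u v : A × Module.Dual F A),
        t12 m ((x ⊗ₜ[F] y) ⊗ₜ[F] (u ⊗ₜ[F] v)) = m x u ⊗ₜ[F] (y ⊗ₜ[F] v) := by
      intro m x y u v
      simp [t12]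
    have ht13 : ∀ (m : (A × Module.Dual F A) →ₗ[F] (A × Module.Dual F A) →ₗ[F]
        (A × Module.Dual F A)) (x y u v : A × Module.Dual F A),
        t13 m ((x ⊗ₜ[F] y) ⊗ₜ[F] (u ⊗ₜ[F] v)) = x ⊗ₜ[F] (u ⊗ₜ[F] m y v) := by
      intro m x y u v
      simp [t13]
    have ht23 : ∀ (m : (A × Module.Dual F A) →ₗ[F] (A × Module.Dual F A) →ₗ[F]
        (A × Module.Dual F A)) (x y u v : A × Module.Dual F A),
        t23 m ((x ⊗ₜ[F] y) ⊗ₜ[F] (u ⊗ₜ[F] v)) = u ⊗ₜ[F] (m x v ⊗ₜ[F] y) := by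
      intro m x y u v
      simp [t23]
    -- product values
    have mEE : ∀ i j, (sD + pD) (E i) (E j) =
        ((s (bA i)) (bA j) + (p (bA i)) (bA j), (0 : Module.Dual F A)) := by
      intro i j
      simp only [LinearMap.add_apply, hsD, hpD, hE, hFv]
      simp [Prod.ext_iff]
    have mEF : ∀ i j, (sD + pD) (E i) (Fv j) =
        ((0 : A), (Rp (bA i)) (bA.coord j)) := by
      intro i j
      simp only [LinearMap.add_apply, hsD, hpD, hE, hFv]
      simp [Prod.ext_iff]
    have mFE : ∀ i j, (sD + pD) (Fv i) (E j) =
        ((0 : A), (Ls (bA j)) (bA.coord i)) := by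
      intro i j
      simp only [LinearMap.add_apply, hsD, hpD, hE, hFv]
      simp [Prod.ext_iff]
    have mFF : ∀ i j, (sD + pD) (Fv i) (Fv j) = 0 := by
      intro i j
      simp only [LinearMap.add_apply, hsD, hpD, hE, hFv]
      simp [Prod.ext_iff]
    have pEE : ∀ i j, pD (E i) (E j) = ((p (bA i)) (bA j), (0 : Module.Dual F A)) := by
      intro i j; simp only [hpD, hE, hFv]; simp [Prod.ext_iff]
    have pEF : ∀ i j, pD (E i) (Fv j) = 0 := by
      intro i j; simp only [hpD, hE, hFv]; simp [Prod.ext_iff]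
    have pFE : ∀ i j, pD (Fv i) (E j) = ((0 : A), (Ls (bA j)) (bA.coord i)) := by
      intro i j; simp only [hpD, hE, hFv]; simp [Prod.ext_iff]
    have pFF : ∀ i j, pD (Fv i) (Fv j) = 0 := by
      intro i j; simp only [hpD, hE, hFv]; simp [Prod.ext_iff]
    have sEE : ∀ i j, sD (E i) (E j) = ((s (bA i)) (bA j), (0 : Module.Dual F A)) := by
      intro i j; simp only [hsD, hE, hFv]; simp [Prod.ext_iff]
    have sEF : ∀ i j, sD (E i) (Fv j) = ((0 : A), (Rp (bA i)) (bA.coord j)) := by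
      intro i j; simp only [hsD, hE, hFv]; simp [Prod.ext_iff]
    have sFE : ∀ i j, sD (Fv i) (E j) = 0 := by
      intro i j; simp only [hsD, hE, hFv]; simp [Prod.ext_iff]
    have sFF : ∀ i j, sD (Fv i) (Fv j) = 0 := by
      intro i j; simp only [hsD, hE, hFv]; simp [Prod.ext_iff]
    -- expansion of r ⊗ r
    have expand : r ⊗ₜ[F] r = ∑ i, ∑ j,
        ((E i ⊗ₜ[F] Fv i) ⊗ₜ[F] (E j ⊗ₜ[F] Fv j) +
          (E i ⊗ₜ[F] Fv i) ⊗ₜ[F] (Fv j ⊗ₜ[F] E j) +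
         ((Fv i ⊗ₜ[F] E i) ⊗ₜ[F] (E j ⊗ₜ[F] Fv j) +
          (Fv i ⊗ₜ[F] E i) ⊗ₜ[F] (Fv j ⊗ₜ[F] E j))) := by
      rw [hr', TensorProduct.sum_tmul]
      refine Finset.sum_congr rfl fun i _ => ?_
      rw [TensorProduct.tmul_sum]
      refine Finset.sum_congr rfl fun j _ => ?_
      rw [TensorProduct.add_tmul, TensorProduct.tmul_add, TensorProduct.tmul_add]
    -- rotation lemmas for triple sums
    have rot3 : ∀ (G : ι → ι → ι → (A × Module.Dual F A) ⊗[F]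
        ((A × Module.Dual F A) ⊗[F] (A × Module.Dual F A))),
        (∑ i, ∑ j, ∑ k, G i j k) = ∑ k, ∑ i, ∑ j, G i j k := by
      intro G
      rw [show (∑ i, ∑ j, ∑ k, G i j k) = ∑ i, ∑ k, ∑ j, G i j k from
        Finset.sum_congr rfl fun i _ => Finset.sum_comm]
      exact Finset.sum_comm
    have rot3' : ∀ (G : ι → ι → ι → (A × Module.Dual F A) ⊗[F]
        ((A × Module.Dual F A) ⊗[F] (A × Module.Dual F A))),
        (∑ i, ∑ j, ∑ k, G i j k) = ∑ j, ∑ k, ∑ i, G i j k := by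
      intro G
      rw [Finset.sum_comm]
      exact Finset.sum_congr rfl fun j _ => Finset.sum_comm
    -- the four key identities
    have L1s : (∑ i, ∑ j, (((s (bA i)) (bA j), (0 : Module.Dual F A)) :
          A × Module.Dual F A) ⊗ₜ[F] (Fv i ⊗ₜ[F] Fv j))
        = ∑ i, ∑ j, E i ⊗ₜ[F] (Fv j ⊗ₜ[F]
            (((0 : A), (Ls (bA j)) (bA.coord i)) : A × Module.Dual F A)) := by
      have hL : ∀ i j, (((s (bA i)) (bA j), (0 : Module.Dual F A)) :
            A × Module.Dual F A) ⊗ₜ[F] (Fv i ⊗ₜ[F] Fv j)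
          = ∑ k, (bA.coord k ((s (bA i)) (bA j))) • (E k ⊗ₜ[F] (Fv i ⊗ₜ[F] Fv j)) := by
        intro i j
        rw [exE ((s (bA i)) (bA j))]
        simp only [TensorProduct.sum_tmul, TensorProduct.tmul_sum,
          TensorProduct.smul_tmul, TensorProduct.tmul_smul, hRp, hLs]
      have hR : ∀ i j, E i ⊗ₜ[F] (Fv j ⊗ₜ[F]
            (((0 : A), (Ls (bA j)) (bA.coord i)) : A × Module.Dual F A))
          = ∑ k, (bA.coord i ((s (bA j)) (bA k))) • (E i ⊗ₜ[F] (Fv j ⊗ₜ[F] Fv k)) := by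
        intro i j
        rw [exF ((Ls (bA j)) (bA.coord i))]
        simp only [TensorProduct.sum_tmul, TensorProduct.tmul_sum,
          TensorProduct.smul_tmul, TensorProduct.tmul_smul, hRp, hLs]
      simp only [hL, hR]
      exact rot3 (fun i j k => (bA.coord k ((s (bA i)) (bA j))) •
        (E k ⊗ₜ[F] (Fv i ⊗ₜ[F] Fv j)))
    have L1p : (∑ i, ∑ j, (((p (bA i)) (bA j), (0 : Module.Dual F A)) :
          A × Module.Dual F A) ⊗ₜ[F] (Fv i ⊗ₜ[F] Fv j))
        = ∑ i, ∑ j, E j ⊗ₜ[F] ((((0 : A), (Rp (bA i)) (bA.coord j)) :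
            A × Module.Dual F A) ⊗ₜ[F] Fv i) := by
      have hL : ∀ i j, (((p (bA i)) (bA j), (0 : Module.Dual F A)) :
            A × Module.Dual F A) ⊗ₜ[F] (Fv i ⊗ₜ[F] Fv j)
          = ∑ k, (bA.coord k ((p (bA i)) (bA j))) • (E k ⊗ₜ[F] (Fv i ⊗ₜ[F] Fv j)) := by
        intro i j
        rw [exE ((p (bA i)) (bA j))]
        simp only [TensorProduct.sum_tmul, TensorProduct.tmul_sum,
          TensorProduct.smul_tmul, TensorProduct.tmul_smul, hRp, hLs]
      have hR : ∀ i j, E j ⊗ₜ[F] ((((0 : A), (Rp (bA i)) (bA.coord j)) :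
            A × Module.Dual F A) ⊗ₜ[F] Fv i)
          = ∑ k, (bA.coord j ((p (bA k)) (bA i))) • (E j ⊗ₜ[F] (Fv k ⊗ₜ[F] Fv i)) := by
        intro i j
        rw [exF ((Rp (bA i)) (bA.coord j))]
        simp only [TensorProduct.sum_tmul, TensorProduct.tmul_sum,
          TensorProduct.smul_tmul, TensorProduct.tmul_smul, hRp, hLs]
      simp only [hL, hR]
      exact rot3' (fun i j k => (bA.coord k ((p (bA i)) (bA j))) •
        (E k ⊗ₜ[F] (Fv i ⊗ₜ[F] Fv j)))
    have L2 : (∑ i, ∑ j, (((0 : A), (Rp (bA i)) (bA.coord j)) :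
          A × Module.Dual F A) ⊗ₜ[F] (Fv i ⊗ₜ[F] E j))
        = ∑ i, ∑ j, Fv i ⊗ₜ[F] (Fv j ⊗ₜ[F]
            ((((p (bA i)) (bA j)), (0 : Module.Dual F A)) : A × Module.Dual F A)) := by
      have hL : ∀ i j, (((0 : A), (Rp (bA i)) (bA.coord j)) :
            A × Module.Dual F A) ⊗ₜ[F] (Fv i ⊗ₜ[F] E j)
          = ∑ k, (bA.coord j ((p (bA k)) (bA i))) • (Fv k ⊗ₜ[F] (Fv i ⊗ₜ[F] E j)) := by
        intro i j
        rw [exF ((Rp (bA i)) (bA.coord j))]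
        simp only [TensorProduct.sum_tmul, TensorProduct.tmul_sum,
          TensorProduct.smul_tmul, TensorProduct.tmul_smul, hRp, hLs]
      have hR : ∀ i j, Fv i ⊗ₜ[F] (Fv j ⊗ₜ[F]
            ((((p (bA i)) (bA j)), (0 : Module.Dual F A)) : A × Module.Dual F A))
          = ∑ k, (bA.coord k ((p (bA i)) (bA j))) • (Fv i ⊗ₜ[F] (Fv j ⊗ₜ[F] E k)) := by
        intro i j
        rw [exE ((p (bA i)) (bA j))]
        simp only [TensorProduct.sum_tmul, TensorProduct.tmul_sum,
          TensorProduct.smul_tmul, TensorProduct.tmul_smul, hRp, hLs]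
      simp only [hL, hR]
      exact rot3 (fun i j k => (bA.coord j ((p (bA k)) (bA i))) •
        (Fv k ⊗ₜ[F] (Fv i ⊗ₜ[F] E j)))
    have L3 : (∑ i, ∑ j, (((0 : A), (Ls (bA j)) (bA.coord i)) :
          A × Module.Dual F A) ⊗ₜ[F] (E i ⊗ₜ[F] Fv j))
        = ∑ i, ∑ j, Fv j ⊗ₜ[F] (((((s (bA i)) (bA j)), (0 : Module.Dual F A)) :
            A × Module.Dual F A) ⊗ₜ[F] Fv i) := by
      have hL : ∀ i j, (((0 : A), (Ls (bA j)) (bA.coord i)) :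
            A × Module.Dual F A) ⊗ₜ[F] (E i ⊗ₜ[F] Fv j)
          = ∑ k, (bA.coord i ((s (bA j)) (bA k))) • (Fv k ⊗ₜ[F] (E i ⊗ₜ[F] Fv j)) := by
        intro i j
        rw [exF ((Ls (bA j)) (bA.coord i))]
        simp only [TensorProduct.sum_tmul, TensorProduct.tmul_sum,
          TensorProduct.smul_tmul, TensorProduct.tmul_smul, hRp, hLs]
      have hR : ∀ i j, Fv j ⊗ₜ[F] (((((s (bA i)) (bA j)), (0 : Module.Dual F A)) :
            A × Module.Dual F A) ⊗ₜ[F] Fv i)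
          = ∑ k, (bA.coord k ((s (bA i)) (bA j))) • (Fv j ⊗ₜ[F] (E k ⊗ₜ[F] Fv i)) := by
        intro i j
        rw [exE ((s (bA i)) (bA j))]
        simp only [TensorProduct.sum_tmul, TensorProduct.tmul_sum,
          TensorProduct.smul_tmul, TensorProduct.tmul_smul, hRp, hLs]
      simp only [hL, hR]
      exact rot3' (fun i j k => (bA.coord i ((s (bA j)) (bA k))) •
        (Fv k ⊗ₜ[F] (E i ⊗ₜ[F] Fv j)))
    -- put everything together
    have hsplit : ∀ i j, ((((s (bA i)) (bA j) + (p (bA i)) (bA j)),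
          (0 : Module.Dual F A)) : A × Module.Dual F A) ⊗ₜ[F] (Fv i ⊗ₜ[F] Fv j)
        = (((s (bA i)) (bA j), (0 : Module.Dual F A)) : A × Module.Dual F A)
            ⊗ₜ[F] (Fv i ⊗ₜ[F] Fv j)
          + (((p (bA i)) (bA j), (0 : Module.Dual F A)) : A × Module.Dual F A)
            ⊗ₜ[F] (Fv i ⊗ₜ[F] Fv j) := by
      intro i j
      rw [← TensorProduct.add_tmul, Prod.mk_add_mk, add_zero]
    rw [expand]
    simp only [map_sum, map_add, ht12, ht13, ht23, mEE, mEF, mFE, mFF, pEE, pEF, pFE,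
      pFF, sEE, sEF, sFE, sFF, TensorProduct.zero_tmul, TensorProduct.tmul_zero,
      add_zero, zero_add, hsplit]
    simp only [Finset.sum_add_distrib]
    rw [L1s, L1p, L2, L3]
    abel
  -- Part (iii)
  · let phi : (A × Module.Dual F A) →ₗ[F] Module.Dual F (A × Module.Dual F A) :=
      LinearMap.mk₂ F (fun u v => v.2 u.1 + u.2 v.1)
        (fun u u' v => by simp only [Prod.fst_add, Prod.snd_add, map_add,
          LinearMap.add_apply]; ring)
        (fun c u v => by simp only [Prod.smul_fst, Prod.smul_snd, map_smul,
          LinearMap.smul_apply, smul_eq_mul]; ring)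
        (fun u v v' => by simp only [Prod.fst_add, Prod.snd_add, map_add,
          LinearMap.add_apply]; ring)
        (fun c u v => by simp only [Prod.smul_fst, Prod.smul_snd, map_smul,
          LinearMap.smul_apply, smul_eq_mul]; ring)
    have hphi : ∀ u v, phi u v = v.2 u.1 + u.2 v.1 := fun u v => rfl
    let eMap : Module.Dual F (A × Module.Dual F A) →ₗ[F] (A × Module.Dual F A) :=
      { toFun := fun v => ∑ i, (v (Fv i) • E i + v (E i) • Fv i),
        map_add' := by
          intro v w
          simp only [LinearMap.add_apply, add_smul, ← Finset.sum_add_distrib]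
          refine Finset.sum_congr rfl fun i _ => ?_
          abel
        map_smul' := by
          intro c v
          simp only [LinearMap.smul_apply, smul_eq_mul, mul_smul, RingHom.id_apply,
            Finset.smul_sum, smul_add] }
    have heMap : ∀ v, eMap v = ∑ i, (v (Fv i) • E i + v (E i) • Fv i) := fun v => rfl
    have h1 : eMap ∘ₗ phi = LinearMap.id := by
      refine LinearMap.ext fun u => ?_
      have key : eMap (phi u) = ∑ i, ((bA.coord i u.1) • E i + (u.2 (bA i)) • Fv i) := by
        rw [heMap]
        refine Finset.sum_congr rfl fun i _ => ?_
        rw [hphi, hphi]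
        simp [hE, hFv]
      simp only [LinearMap.comp_apply, LinearMap.id_apply]
      rw [key, ← hexp u]
    have h2 : phi ∘ₗ eMap = LinearMap.id := by
      refine LinearMap.ext fun v => LinearMap.ext fun w => ?_
      have hw : v w = ∑ i, ((bA.coord i w.1) * v (E i) + (w.2 (bA i)) * v (Fv i)) := by
        conv_lhs => rw [hexp w]
        rw [map_sum]
        refine Finset.sum_congr rfl fun i _ => ?_
        rw [map_add, map_smul, map_smul, smul_eq_mul, smul_eq_mul]
      have hfst : (eMap v).1 = ∑ i, v (Fv i) • bA i := by
        rw [heMap, Prod.fst_sum]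
        refine Finset.sum_congr rfl fun i _ => ?_
        simp [hE, hFv]
      have hsnd : (eMap v).2 = ∑ i, v (E i) • bA.coord i := by
        rw [heMap, Prod.snd_sum]
        refine Finset.sum_congr rfl fun i _ => ?_
        simp [hE, hFv]
      simp only [LinearMap.comp_apply, LinearMap.id_apply]
      rw [hphi, hfst, hsnd, map_sum, LinearMap.sum_apply, hw, ← Finset.sum_add_distrib]
      refine Finset.sum_congr rfl fun i _ => ?_
      simp only [map_smul, smul_eq_mul, LinearMap.smul_apply, Module.Basis.coord_apply]
      ring
    refine ⟨LinearEquiv.ofLinear eMap phi h1 h2, ?_, ?_⟩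
    · intro u v
      rw [LinearEquiv.ofLinear_apply, heMap, map_sum, hr']
      simp only [pair2, map_sum, map_add, map_smul, smul_eq_mul, LinearMap.coe_comp,
        LinearEquiv.coe_coe, Function.comp_apply, TensorProduct.map_tmul,
        TensorProduct.lid_tmul]
      refine Finset.sum_congr rfl fun i _ => ?_
      ring
    · intro u v
      rw [LinearEquiv.ofLinear_symm_apply]
      exact hphi u v
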